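/- Let k ≥ 1 and let Ψ be a Max-kSAT instance with m_j j-clauses for j = 1,…,k. Then val_Ψ ≤ min{ Σ_{j=1}^k m_j, bias(Ψ)/2 + Σ_{j=1}^k ((2^j + j − 2)/2^j)·m_j }. (Lemma 6.1.) -/

import Mathlib

/-- A `Max-kSAT` clause: a disjunction of between 1 and `k` literals on pairwise
distinct variables. A literal on variable `i` with polarity `b` (`b = true` for `xᵢ`,
`b = false` for `¬xᵢ`) evaluates to `σ i == b`. -/
structure KClause (n k : ℕ) where
  lits : List (Fin n × Bool)
  nodup : (lits.map Prod.fst).Nodup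
  len_pos : 0 < lits.length
  len_le : lits.length ≤ k

/-- A clause is satisfied iff at least one of its literals receives value 1. -/
def KClause.eval {n k : ℕ} (C : KClause n k) (σ : Fin n → Bool) : Bool :=
  C.lits.any (fun l => σ l.1 == l.2)

/-- The number of clauses of `Ψ` satisfied by `σ`, i.e. `val_Ψ(σ)`. -/
def satCount {n k : ℕ} (Ψ : List (KClause n k)) (σ : Fin n → Bool) : ℕ :=
  Ψ.countP (fun C => C.eval σ)

/-- `val_Ψ`: the maximum number of simultaneously satisfiable clauses. -/
def maxVal {n k : ℕ} (Ψ : List (KClause n k)) : ℕ :=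
  Finset.univ.sup (fun σ : Fin n → Bool => satCount Ψ σ)

/-- `m_r`: the number of `r`-clauses (clauses on exactly `r` variables). -/
def numLen {n k : ℕ} (Ψ : List (KClause n k)) (r : ℕ) : ℕ :=
  Ψ.countP (fun C => C.lits.length == r)

/-- The number of `r`-clauses containing the literal on variable `v` with
polarity `b` (so `pos_v^{(r)}` for `b = true` and `neg_v^{(r)}` for `b = false`). -/
def cntLit {n k : ℕ} (Ψ : List (KClause n k)) (v : Fin n) (b : Bool) (r : ℕ) : ℕ :=
  Ψ.countP (fun C => decide (C.lits.length = r ∧ (v, b) ∈ C.lits))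

/-- `bias(Ψ) = Σᵢ |Σ_{r=1}^k 2^{−(r−1)}·(posᵢ^{(r)} − negᵢ^{(r)})|`. -/
noncomputable def bias {n k : ℕ} (Ψ : List (KClause n k)) : ℝ :=
  ∑ v : Fin n,
    |∑ r ∈ Finset.Icc 1 k,
      ((cntLit Ψ v true r : ℝ) - (cntLit Ψ v false r : ℝ)) / 2 ^ (r - 1)|

section aux
variable {n k : ℕ}

lemma map_sum_add (f g : KClause n k → ℝ) (l : List (KClause n k)) :
    (l.map (fun a => f a + g a)).sum = (l.map f).sum + (l.map g).sum := by
  induction l with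
  | nil => simp
  | cons a l ih => simp [ih]; ring

lemma countP_sat (σ : Fin n → Bool) (L : List (Fin n × Bool))
    (h : (L.map Prod.fst).Nodup) :
    (L.countP (fun l => σ l.1 == l.2) : ℕ) =
      ∑ v : Fin n, if (v, σ v) ∈ L then 1 else 0 := by
  induction L with
  | nil => simp
  | cons a L ih =>
    obtain ⟨w, b⟩ := a
    simp only [List.map_cons, List.nodup_cons] at h
    have hw : ∀ c, (w, c) ∉ L := by
      intro c hc
      exact h.1 (List.mem_map.mpr ⟨(w, c), hc, rfl⟩)
    rw [List.countP_cons, ih h.2]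
    have key : ∀ v : Fin n, (if (v, σ v) ∈ (w, b) :: L then 1 else 0)
        = (if (v, σ v) ∈ L then 1 else 0) + (if v = w then (if σ w = b then 1 else 0) else 0) := by
      intro v
      by_cases hv : v = w
      · subst hv
        by_cases hb : σ v = b <;>
          simp [List.mem_cons, hw (σ v), hw b, Prod.ext_iff, hb]
      · simp [List.mem_cons, Prod.ext_iff, hv]
    rw [Finset.sum_congr rfl (fun v _ => key v), Finset.sum_add_distrib,
      Finset.sum_ite_eq' Finset.univ w]
    simp

lemma len_sum (L : List (Fin n × Bool)) (h : (L.map Prod.fst).Nodup) :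
    (∑ v : Fin n, ((if (v, true) ∈ L then 1 else 0) + (if (v, false) ∈ L then 1 else 0)) : ℕ)
      = L.length := by
  induction L with
  | nil => simp
  | cons a L ih =>
    obtain ⟨w, b⟩ := a
    simp only [List.map_cons, List.nodup_cons] at h
    have hw : ∀ c, (w, c) ∉ L := by
      intro c hc
      exact h.1 (List.mem_map.mpr ⟨(w, c), hc, rfl⟩)
    have key : ∀ v : Fin n,
        ((if (v, true) ∈ (w, b) :: L then 1 else 0) + (if (v, false) ∈ (w, b) :: L then 1 else 0) : ℕ)
        = ((if (v, true) ∈ L then 1 else 0) + (if (v, false) ∈ L then 1 else 0))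
          + (if v = w then 1 else 0) := by
      intro v
      by_cases hv : v = w
      · subst hv
        cases b <;> simp [List.mem_cons, hw true, hw false, Prod.ext_iff]
      · simp [List.mem_cons, Prod.ext_iff, hv]
    rw [Finset.sum_congr rfl (fun v _ => key v), Finset.sum_add_distrib,
      Finset.sum_ite_eq' Finset.univ w, ih h.2]
    simp

lemma sum_by_len (Ψ : List (KClause n k)) (g : ℕ → ℝ) :
    (Ψ.map (fun C => g C.lits.length)).sum
      = ∑ r ∈ Finset.Icc 1 k, g r * (numLen Ψ r : ℝ) := by
  induction Ψ with
  | nil => simp [numLen]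
  | cons C Ψ ih =>
    have hmem : C.lits.length ∈ Finset.Icc 1 k := Finset.mem_Icc.mpr ⟨C.len_pos, C.len_le⟩
    have hnum : ∀ r, (numLen (C :: Ψ) r : ℝ)
        = (numLen Ψ r : ℝ) + (if C.lits.length = r then 1 else 0) := by
      intro r
      by_cases h : C.lits.length = r <;> simp [numLen, List.countP_cons, h]
    have h1 : ∑ r ∈ Finset.Icc 1 k, g r * (numLen (C :: Ψ) r : ℝ)
        = (∑ r ∈ Finset.Icc 1 k, g r * (numLen Ψ r : ℝ))
          + ∑ r ∈ Finset.Icc 1 k, (if C.lits.length = r then g r else 0) := by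
      rw [← Finset.sum_add_distrib]
      refine Finset.sum_congr rfl fun r _ => ?_
      rw [hnum r]
      by_cases h : C.lits.length = r <;> simp [h] <;> ring
    rw [List.map_cons, List.sum_cons, ih, h1, Finset.sum_ite_eq, if_pos hmem]
    ring

lemma sum_cnt_tf (Ψ : List (KClause n k)) (r : ℕ) :
    (∑ v : Fin n, ((cntLit Ψ v true r : ℝ) + (cntLit Ψ v false r : ℝ)))
      = r * (numLen Ψ r : ℝ) := by
  induction Ψ with
  | nil => simp [cntLit, numLen]
  | cons C Ψ ih =>
    have hcnt : ∀ (v : Fin n) (b : Bool), (cntLit (C :: Ψ) v b r : ℝ)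
        = (cntLit Ψ v b r : ℝ) + (if C.lits.length = r ∧ (v, b) ∈ C.lits then 1 else 0) := by
      intro v b
      by_cases h : C.lits.length = r ∧ (v, b) ∈ C.lits <;> simp [cntLit, List.countP_cons, h]
    have hnum : (numLen (C :: Ψ) r : ℝ)
        = (numLen Ψ r : ℝ) + (if C.lits.length = r then 1 else 0) := by
      by_cases h : C.lits.length = r <;> simp [numLen, List.countP_cons, h]
    rw [Finset.sum_congr rfl (fun v _ => by rw [hcnt v true, hcnt v false]), hnum]
    have key : ∑ v : Fin n, ((if C.lits.length = r ∧ (v, true) ∈ C.lits then (1:ℝ) else 0)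
        + (if C.lits.length = r ∧ (v, false) ∈ C.lits then 1 else 0))
        = r * (if C.lits.length = r then 1 else 0) := by
      by_cases h : C.lits.length = r
      · subst h
        simp only [true_and, if_pos rfl, mul_one]
        have := len_sum C.lits C.nodup
        have := congrArg (fun m : ℕ => (m : ℝ)) this
        push_cast at this
        rw [this]
        simp
      · simp [h]
    calc ∑ v : Fin n, ((cntLit Ψ v true r : ℝ) + (if C.lits.length = r ∧ (v, true) ∈ C.lits then 1 else 0)
          + ((cntLit Ψ v false r : ℝ) + (if C.lits.length = r ∧ (v, false) ∈ C.lits then 1 else 0)))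
        = (∑ v : Fin n, ((cntLit Ψ v true r : ℝ) + (cntLit Ψ v false r : ℝ)))
          + ∑ v : Fin n, ((if C.lits.length = r ∧ (v, true) ∈ C.lits then (1:ℝ) else 0)
            + (if C.lits.length = r ∧ (v, false) ∈ C.lits then 1 else 0)) := by
          rw [← Finset.sum_add_distrib]; congr 1; ext v; ring
      _ = r * ((numLen Ψ r : ℝ) + (if C.lits.length = r then 1 else 0)) := by
          rw [ih, key]; ring

lemma sum_lits (Ψ : List (KClause n k)) (σ : Fin n → Bool) :
    (Ψ.map (fun C => (2 / 2 ^ C.lits.length) *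
        ((C.lits.countP (fun l => σ l.1 == l.2) : ℕ) : ℝ))).sum
      = ∑ v : Fin n, ∑ r ∈ Finset.Icc 1 k, (2 / 2 ^ r) * (cntLit Ψ v (σ v) r : ℝ) := by
  induction Ψ with
  | nil => simp [cntLit]
  | cons C Ψ ih =>
    have hmem : C.lits.length ∈ Finset.Icc 1 k := Finset.mem_Icc.mpr ⟨C.len_pos, C.len_le⟩
    have hcnt : ∀ (v : Fin n) (r : ℕ), (cntLit (C :: Ψ) v (σ v) r : ℝ)
        = (cntLit Ψ v (σ v) r : ℝ) + (if C.lits.length = r ∧ (v, σ v) ∈ C.lits then 1 else 0) := by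
      intro v r
      by_cases h : C.lits.length = r ∧ (v, σ v) ∈ C.lits <;> simp [cntLit, List.countP_cons, h]
    simp only [List.map_cons, List.sum_cons, ih]
    have expand : ∀ v : Fin n, ∑ r ∈ Finset.Icc 1 k, (2 / 2 ^ r) * (cntLit (C :: Ψ) v (σ v) r : ℝ)
        = (∑ r ∈ Finset.Icc 1 k, (2 / 2 ^ r) * (cntLit Ψ v (σ v) r : ℝ))
          + (2 / 2 ^ C.lits.length) * (if (v, σ v) ∈ C.lits then 1 else 0) := by
      intro v
      rw [Finset.sum_congr rfl (fun r _ => by rw [hcnt v r, mul_add]), Finset.sum_add_distrib]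
      congr 1
      have : ∀ r ∈ Finset.Icc 1 k, (2 / 2 ^ r) * (if C.lits.length = r ∧ (v, σ v) ∈ C.lits then (1:ℝ) else 0)
          = (if C.lits.length = r then (2 / 2 ^ r) * (if (v, σ v) ∈ C.lits then 1 else 0) else 0) := by
        intro r _
        by_cases h1 : C.lits.length = r <;> by_cases h2 : (v, σ v) ∈ C.lits <;> simp [h1, h2]
      rw [Finset.sum_congr rfl this, Finset.sum_ite_eq, if_pos hmem]
    rw [Finset.sum_congr rfl (fun v _ => expand v), Finset.sum_add_distrib]
    have : ∑ v : Fin n, (2 / 2 ^ C.lits.length) * (if (v, σ v) ∈ C.lits then (1:ℝ) else 0)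
        = (2 / 2 ^ C.lits.length) * ((C.lits.countP (fun l => σ l.1 == l.2) : ℕ) : ℝ) := by
      rw [← Finset.mul_sum]
      congr 1
      have := countP_sat σ C.lits C.nodup
      have := congrArg (fun m : ℕ => (m : ℝ)) this
      push_cast at this
      rw [this]
    rw [this]; ring

end aux

section main
variable {n k : ℕ}

lemma countP_cast (p : KClause n k → Bool) (l : List (KClause n k)) :
    ((l.countP p : ℕ) : ℝ) = (l.map (fun a => if p a then (1:ℝ) else 0)).sum := by
  induction l with
  | nil => simp
  | cons a l ih => by_cases h : p a <;> simp [List.countP_cons, h, ih] <;> ring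


/-- Lemma 6.1 -/
theorem ksat_upper_bound {n k : ℕ} (hk : 1 ≤ k) (Ψ : List (KClause n k)) :
    (maxVal Ψ : ℝ) ≤
      min (∑ j ∈ Finset.Icc 1 k, (numLen Ψ j : ℝ))
        (bias Ψ / 2 + ∑ j ∈ Finset.Icc 1 k,
          (((2 : ℝ) ^ j + (j : ℝ) - 2) / 2 ^ j) * (numLen Ψ j : ℝ)) := by
  obtain ⟨σ, -, hσ⟩ := Finset.exists_mem_eq_sup (Finset.univ : Finset (Fin n → Bool))
    Finset.univ_nonempty (fun σ => satCount Ψ σ)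
  have hmax : maxVal Ψ = satCount Ψ σ := hσ
  rw [hmax]
  have hsum1 : (Ψ.length : ℝ) = ∑ j ∈ Finset.Icc 1 k, (numLen Ψ j : ℝ) := by
    have := sum_by_len Ψ (fun _ => (1:ℝ))
    simpa using this
  refine le_min ?_ ?_
  · rw [← hsum1]
    exact_mod_cast List.countP_le_length
  -- second bound
  have stepA : (satCount Ψ σ : ℝ)
      = (Ψ.map (fun C => if C.eval σ then (1:ℝ) else 0)).sum :=
    countP_cast _ _
  have stepB : (Ψ.map (fun C => if C.eval σ then (1:ℝ) else 0)).sum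
      ≤ (Ψ.map (fun C => (1 - 2 / 2 ^ C.lits.length)
          + (2 / 2 ^ C.lits.length) *
            ((C.lits.countP (fun l => σ l.1 == l.2) : ℕ) : ℝ))).sum := by
    refine List.sum_le_sum fun C _ => ?_
    have hpow : (2:ℝ) ≤ 2 ^ C.lits.length := by
      calc (2:ℝ) = 2 ^ 1 := by norm_num
        _ ≤ 2 ^ C.lits.length := by
            exact pow_le_pow_right₀ one_le_two C.len_pos
    have hpos : (0:ℝ) < 2 ^ C.lits.length := by positivity
    by_cases h : C.eval σ
    · have hcnt : 0 < C.lits.countP (fun l => σ l.1 == l.2) := by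
        rw [List.countP_pos_iff]
        unfold KClause.eval at h
        exact List.any_eq_true.mp h
      have hcnt' : (1:ℝ) ≤ ((C.lits.countP (fun l => σ l.1 == l.2) : ℕ) : ℝ) := by
        exact_mod_cast hcnt
      have hw : (0:ℝ) ≤ 2 / 2 ^ C.lits.length := by positivity
      rw [if_pos h]
      nlinarith
    · have h' : C.eval σ = false := by simpa using h
      have hcnt : C.lits.countP (fun l => σ l.1 == l.2) = 0 := by
        rw [List.countP_eq_zero]
        unfold KClause.eval at h'
        exact List.any_eq_false.mp h'
      rw [if_neg h, hcnt]
      have : 2 / (2:ℝ) ^ C.lits.length ≤ 1 := by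
        rw [div_le_one hpos]; exact hpow
      push_cast
      linarith
  have stepC : (Ψ.map (fun C => (1 - 2 / 2 ^ C.lits.length)
          + (2 / 2 ^ C.lits.length) *
            ((C.lits.countP (fun l => σ l.1 == l.2) : ℕ) : ℝ))).sum
      = (∑ r ∈ Finset.Icc 1 k, (1 - 2 / 2 ^ r) * (numLen Ψ r : ℝ))
        + ∑ v : Fin n, ∑ r ∈ Finset.Icc 1 k, (2 / 2 ^ r) * (cntLit Ψ v (σ v) r : ℝ) := by
    rw [map_sum_add, sum_by_len Ψ (fun r => 1 - 2 / 2 ^ r), sum_lits Ψ σ]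
  have hv : ∀ v : Fin n,
      ∑ r ∈ Finset.Icc 1 k, (2 / 2 ^ r) * (cntLit Ψ v (σ v) r : ℝ)
        ≤ (∑ r ∈ Finset.Icc 1 k,
            ((cntLit Ψ v true r : ℝ) + (cntLit Ψ v false r : ℝ)) / 2 ^ r)
          + |∑ r ∈ Finset.Icc 1 k,
              ((cntLit Ψ v true r : ℝ) - (cntLit Ψ v false r : ℝ)) / 2 ^ (r - 1)| / 2 := by
    intro v
    have hpow : ∀ r ∈ Finset.Icc 1 k, (2:ℝ) ^ r = 2 ^ (r - 1) * 2 := by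
      intro r hr
      rw [← pow_succ, Nat.sub_add_cancel (Finset.mem_Icc.mp hr).1]
    have e1 : ∑ r ∈ Finset.Icc 1 k,
          ((cntLit Ψ v true r : ℝ) - (cntLit Ψ v false r : ℝ)) / 2 ^ (r - 1)
        = (∑ r ∈ Finset.Icc 1 k, (2 / 2 ^ r) * (cntLit Ψ v true r : ℝ))
          - ∑ r ∈ Finset.Icc 1 k, (2 / 2 ^ r) * (cntLit Ψ v false r : ℝ) := by
      rw [← Finset.sum_sub_distrib]
      refine Finset.sum_congr rfl fun r hr => ?_
      have h2 := hpow r hr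
      have hp : (0:ℝ) < 2 ^ (r - 1) := by positivity
      rw [h2]
      field_simp
    have e2 : ∑ r ∈ Finset.Icc 1 k,
          ((cntLit Ψ v true r : ℝ) + (cntLit Ψ v false r : ℝ)) / 2 ^ r
        = ((∑ r ∈ Finset.Icc 1 k, (2 / 2 ^ r) * (cntLit Ψ v true r : ℝ))
          + ∑ r ∈ Finset.Icc 1 k, (2 / 2 ^ r) * (cntLit Ψ v false r : ℝ)) / 2 := by
      rw [← Finset.sum_add_distrib, Finset.sum_div]
      refine Finset.sum_congr rfl fun r hr => ?_
      have hp : (0:ℝ) < 2 ^ r := by positivity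
      field_simp
    have h1 := le_abs_self (∑ r ∈ Finset.Icc 1 k,
        ((cntLit Ψ v true r : ℝ) - (cntLit Ψ v false r : ℝ)) / 2 ^ (r - 1))
    have h2 := neg_abs_le (∑ r ∈ Finset.Icc 1 k,
        ((cntLit Ψ v true r : ℝ) - (cntLit Ψ v false r : ℝ)) / 2 ^ (r - 1))
    cases hb : σ v <;> linarith
  have stepD : ∑ v : Fin n, ∑ r ∈ Finset.Icc 1 k, (2 / 2 ^ r) * (cntLit Ψ v (σ v) r : ℝ)
      ≤ (∑ r ∈ Finset.Icc 1 k, ((r : ℝ) / 2 ^ r) * (numLen Ψ r : ℝ)) + bias Ψ / 2 := by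
    calc ∑ v : Fin n, ∑ r ∈ Finset.Icc 1 k, (2 / 2 ^ r) * (cntLit Ψ v (σ v) r : ℝ)
        ≤ ∑ v : Fin n, ((∑ r ∈ Finset.Icc 1 k,
            ((cntLit Ψ v true r : ℝ) + (cntLit Ψ v false r : ℝ)) / 2 ^ r)
          + |∑ r ∈ Finset.Icc 1 k,
              ((cntLit Ψ v true r : ℝ) - (cntLit Ψ v false r : ℝ)) / 2 ^ (r - 1)| / 2) :=
          Finset.sum_le_sum fun v _ => hv v
      _ = (∑ v : Fin n, ∑ r ∈ Finset.Icc 1 k,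
            ((cntLit Ψ v true r : ℝ) + (cntLit Ψ v false r : ℝ)) / 2 ^ r) + bias Ψ / 2 := by
          rw [Finset.sum_add_distrib, bias, Finset.sum_div]
      _ = (∑ r ∈ Finset.Icc 1 k, ((r : ℝ) / 2 ^ r) * (numLen Ψ r : ℝ)) + bias Ψ / 2 := by
          congr 1
          rw [Finset.sum_comm]
          refine Finset.sum_congr rfl fun r _ => ?_
          rw [← Finset.sum_div, sum_cnt_tf Ψ r]
          ring
  have final : (∑ r ∈ Finset.Icc 1 k, (1 - 2 / 2 ^ r) * (numLen Ψ r : ℝ))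
      + ((∑ r ∈ Finset.Icc 1 k, ((r : ℝ) / 2 ^ r) * (numLen Ψ r : ℝ)) + bias Ψ / 2)
      = bias Ψ / 2 + ∑ j ∈ Finset.Icc 1 k,
          (((2 : ℝ) ^ j + (j : ℝ) - 2) / 2 ^ j) * (numLen Ψ j : ℝ) := by
    have : ∀ j ∈ Finset.Icc 1 k,
        (1 - 2 / 2 ^ j) * (numLen Ψ j : ℝ) + ((j : ℝ) / 2 ^ j) * (numLen Ψ j : ℝ)
        = (((2 : ℝ) ^ j + (j : ℝ) - 2) / 2 ^ j) * (numLen Ψ j : ℝ) := by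
      intro j _
      have hp : (0:ℝ) < 2 ^ j := by positivity
      field_simp
      ring
    have comb : (∑ r ∈ Finset.Icc 1 k, (1 - 2 / 2 ^ r) * (numLen Ψ r : ℝ))
        + (∑ r ∈ Finset.Icc 1 k, ((r : ℝ) / 2 ^ r) * (numLen Ψ r : ℝ))
        = ∑ j ∈ Finset.Icc 1 k,
            (((2 : ℝ) ^ j + (j : ℝ) - 2) / 2 ^ j) * (numLen Ψ j : ℝ) := by
      rw [← Finset.sum_add_distrib]
      exact Finset.sum_congr rfl this
    linarith [comb]
  calc (satCount Ψ σ : ℝ)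
      ≤ (∑ r ∈ Finset.Icc 1 k, (1 - 2 / 2 ^ r) * (numLen Ψ r : ℝ))
        + ∑ v : Fin n, ∑ r ∈ Finset.Icc 1 k, (2 / 2 ^ r) * (cntLit Ψ v (σ v) r : ℝ) := by
        rw [stepA, ← stepC]; exact stepB
    _ ≤ (∑ r ∈ Finset.Icc 1 k, (1 - 2 / 2 ^ r) * (numLen Ψ r : ℝ))
        + ((∑ r ∈ Finset.Icc 1 k, ((r : ℝ) / 2 ^ r) * (numLen Ψ r : ℝ)) + bias Ψ / 2) := by
        linarith [stepD]
    _ = _ := final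


end main
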